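/- Let Λ be a free abelian group of finite rank n with ℤ-basis ω₁,...,ω_n. For every i ≥ 0, the assignment e^{Σ aⱼωⱼ} ↦ ∏ⱼ (1-ωⱼ)^{-aⱼ} (interpreted in the truncated ring) defines a ring isomorphism φᵢ : ℤ[Λ]/I_m^{i+1} → S*(Λ)/I_a^{i+1}, with inverse determined by ωⱼ ↦ 1 - e^{-ωⱼ}. -/

import Mathlib

open AddMonoidAlgebra MvPolynomial

/-- The augmentation ideal `I_m ⊆ ℤ[Λ]`, `Λ = Fin n →₀ ℤ`: the kernel of `e^λ ↦ 1`,
generated by the elements `e^λ - 1`. -/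
noncomputable def ImIdeal (n : ℕ) : Ideal (AddMonoidAlgebra ℤ (Fin n →₀ ℤ)) :=
  Ideal.span {p | ∃ lam : Fin n →₀ ℤ, p = AddMonoidAlgebra.single lam (1 : ℤ) - 1}

/-- The augmentation ideal `I_a = S^{>0}(Λ) ⊆ S*(Λ)`, realized as the ideal of
`MvPolynomial (Fin n) ℤ` generated by the variables. -/
noncomputable def IaIdeal (n : ℕ) : Ideal (MvPolynomial (Fin n) ℤ) :=
  Ideal.span (Set.range (MvPolynomial.X : Fin n → MvPolynomial (Fin n) ℤ))

set_option synthInstance.maxHeartbeats 1000000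
set_option maxHeartbeats 1000000

section Aux

variable (n i : ℕ)

/-- extension lemma -/
theorem myRingHomExt {n : ℕ} {R : Type*} [CommRing R]
    {f g : AddMonoidAlgebra ℤ (Fin n →₀ ℤ) →+* R}
    (h1 : ∀ j : Fin n, f (AddMonoidAlgebra.single (Finsupp.single j 1) (1:ℤ)) =
        g (AddMonoidAlgebra.single (Finsupp.single j 1) (1:ℤ)))
    (h2 : ∀ j : Fin n, f (AddMonoidAlgebra.single (-(Finsupp.single j 1)) (1:ℤ)) =
        g (AddMonoidAlgebra.single (-(Finsupp.single j 1)) (1:ℤ))) : f = g := by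
  have key : ∀ a : Fin n →₀ ℤ,
      f (AddMonoidAlgebra.single a (1:ℤ)) = g (AddMonoidAlgebra.single a (1:ℤ)) := by
    intro a
    induction a using Finsupp.induction_linear with
    | zero =>
      have : (AddMonoidAlgebra.single (0 : Fin n →₀ ℤ) (1:ℤ)) = 1 := rfl
      rw [this, map_one, map_one]
    | add a b ha hb =>
      have : (AddMonoidAlgebra.single (a + b) (1:ℤ)) =
          AddMonoidAlgebra.single a (1:ℤ) * AddMonoidAlgebra.single b (1:ℤ) := by
        rw [AddMonoidAlgebra.single_mul_single, one_mul]
      rw [this, map_mul, map_mul, ha, hb]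
    | single j c =>
      induction c using Int.induction_on with
      | zero =>
        rw [Finsupp.single_zero]
        have : (AddMonoidAlgebra.single (0 : Fin n →₀ ℤ) (1:ℤ)) = 1 := rfl
        rw [this, map_one, map_one]
      | succ k ih =>
        have : Finsupp.single j ((k:ℤ) + 1) = Finsupp.single j (k:ℤ) + Finsupp.single j 1 :=
          Finsupp.single_add j _ _
        rw [this]
        have h3 : (AddMonoidAlgebra.single (Finsupp.single j (k:ℤ) + Finsupp.single j 1) (1:ℤ)) =
            AddMonoidAlgebra.single (Finsupp.single j (k:ℤ)) (1:ℤ) *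
              AddMonoidAlgebra.single (Finsupp.single j 1) (1:ℤ) := by
          rw [AddMonoidAlgebra.single_mul_single, one_mul]
        rw [h3, map_mul, map_mul, ih, h1]
      | pred k ih =>
        have : Finsupp.single j (-(k:ℤ) - 1) = Finsupp.single j (-(k:ℤ)) + (-(Finsupp.single j 1)) := by
          rw [← Finsupp.single_neg, ← Finsupp.single_add]; ring_nf
        rw [this]
        have h3 : (AddMonoidAlgebra.single (Finsupp.single j (-(k:ℤ)) + (-(Finsupp.single j 1))) (1:ℤ)) =
            AddMonoidAlgebra.single (Finsupp.single j (-(k:ℤ))) (1:ℤ) *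
              AddMonoidAlgebra.single (-(Finsupp.single j 1)) (1:ℤ) := by
          rw [AddMonoidAlgebra.single_mul_single, one_mul]
        rw [h3, map_mul, map_mul, ih, h2]
  refine AddMonoidAlgebra.ringHom_ext ?_ key
  intro b
  have : (AddMonoidAlgebra.single (0 : Fin n →₀ ℤ) (b:ℤ)) = b • (1 : AddMonoidAlgebra ℤ (Fin n →₀ ℤ)) := by
    rw [zsmul_eq_mul]
    have : ((b : ℤ) : AddMonoidAlgebra ℤ (Fin n →₀ ℤ)) = AddMonoidAlgebra.single 0 (b:ℤ) := by
      simp [AddMonoidAlgebra.intCast_def]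
    rw [this, mul_one]
  rw [this, map_zsmul, map_zsmul, map_one, map_one]

abbrev Qa := MvPolynomial (Fin n) ℤ ⧸ (IaIdeal n ^ (i+1))
abbrev Qm := AddMonoidAlgebra ℤ (Fin n →₀ ℤ) ⧸ (ImIdeal n ^ (i+1))

lemma X_nilpotent (j : Fin n) :
    IsNilpotent (Ideal.Quotient.mk (IaIdeal n ^ (i+1)) (MvPolynomial.X j)) := by
  refine ⟨i+1, ?_⟩
  rw [← map_pow, Ideal.Quotient.eq_zero_iff_mem]
  have hx : (MvPolynomial.X j : MvPolynomial (Fin n) ℤ) ∈ IaIdeal n :=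
    Ideal.subset_span (Set.mem_range_self j)
  exact Ideal.pow_mem_pow hx _

noncomputable def uu (j : Fin n) : (Qa n i)ˣ := ((X_nilpotent n i j).isUnit_one_sub).unit

lemma uu_val (j : Fin n) : (uu n i j : Qa n i) = 1 - Ideal.Quotient.mk _ (MvPolynomial.X j) :=
  IsUnit.unit_spec _

noncomputable def whom : Multiplicative (Fin n →₀ ℤ) →* (Qa n i)ˣ :=
  AddMonoidHom.toMultiplicativeLeft
    (Finsupp.liftAddHom (α := Fin n) (M := ℤ) (N := Additive (Qa n i)ˣ) fun j => zmultiplesHom _ (Additive.ofMul (uu n i j)⁻¹))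

lemma whom_single (j : Fin n) (c : ℤ) :
    whom n i (Multiplicative.ofAdd (Finsupp.single j c)) = ((uu n i j)⁻¹) ^ c := by
  simp [whom, AddMonoidHom.toMultiplicativeLeft, Finsupp.liftAddHom_apply_single,
    zmultiplesHom_apply]

noncomputable def theta : AddMonoidAlgebra ℤ (Fin n →₀ ℤ) →ₐ[ℤ] Qa n i :=
  AddMonoidAlgebra.lift ℤ _ _ ((Units.coeHom _).comp (whom n i))

lemma theta_single (lam : Fin n →₀ ℤ) :
    theta n i (AddMonoidAlgebra.single lam (1:ℤ)) =
      ((whom n i (Multiplicative.ofAdd lam) : (Qa n i)ˣ) : Qa n i) := by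
  rw [theta, AddMonoidAlgebra.lift_single, one_smul]; rfl

noncomputable abbrev Ja : Ideal (Qa n i) := (IaIdeal n).map (Ideal.Quotient.mk _)

noncomputable def Hsub : Subgroup (Qa n i)ˣ where
  carrier := {v | (v : Qa n i) - 1 ∈ Ja n i}
  one_mem' := by simp
  mul_mem' := by
    intro a b ha hb
    have : ((a*b : (Qa n i)ˣ) : Qa n i) - 1 =
        (a:Qa n i)*((b:Qa n i)-1) + ((a:Qa n i)-1) := by
      rw [Units.val_mul]; ring
    show _ ∈ Ja n i
    rw [this]
    exact Ideal.add_mem _ (Ideal.mul_mem_left _ _ hb) ha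
  inv_mem' := by
    intro a ha
    have h : ((a⁻¹ : (Qa n i)ˣ) : Qa n i) * ((1:Qa n i) - (a:Qa n i)) =
        ((a⁻¹ : (Qa n i)ˣ) : Qa n i) - 1 := by
      rw [mul_sub, mul_one, Units.inv_mul]
    show ((a⁻¹ : (Qa n i)ˣ) : Qa n i) - 1 ∈ Ja n i
    rw [← h]
    have h2 : (1:Qa n i) - (a:Qa n i) = -((a:Qa n i) - 1) := by ring
    rw [h2]
    exact Ideal.mul_mem_left _ _ (neg_mem ha)
  
lemma uu_mem : ∀ j, uu n i j ∈ Hsub n i := by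
  intro j
  show ((uu n i j : Qa n i) - 1) ∈ Ja n i
  rw [uu_val]
  have : (1 : Qa n i) - Ideal.Quotient.mk _ (MvPolynomial.X j) - 1 =
      -(Ideal.Quotient.mk _ (MvPolynomial.X j)) := by ring
  rw [this]
  exact neg_mem (Ideal.mem_map_of_mem _ (Ideal.subset_span ⟨j, rfl⟩))

lemma whom_mem (lam : Fin n →₀ ℤ) : whom n i (Multiplicative.ofAdd lam) ∈ Hsub n i := by
  induction lam using Finsupp.induction_linear with
  | zero => rw [ofAdd_zero, map_one]; exact one_mem _
  | add a b ha hb => rw [ofAdd_add, map_mul]; exact mul_mem ha hb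
  | single j c =>
    rw [whom_single]
    exact zpow_mem (inv_mem (uu_mem n i j)) c

lemma theta_ker : ImIdeal n ^ (i+1) ≤ RingHom.ker (theta n i).toRingHom := by
  have h1 : (ImIdeal n).map (theta n i).toRingHom ≤ Ja n i := by
    rw [ImIdeal, Ideal.map_span, Ideal.span_le]
    rintro _ ⟨_, ⟨lam, rfl⟩, rfl⟩
    have : (theta n i).toRingHom (AddMonoidAlgebra.single lam (1:ℤ) - 1) =
        ((whom n i (Multiplicative.ofAdd lam) : (Qa n i)ˣ) : Qa n i) - 1 := by
      rw [map_sub, map_one]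
      show theta n i _ - 1 = _
      rw [theta_single]
    rw [SetLike.mem_coe, this]
    exact whom_mem n i lam
  intro x hx
  have h2 := Ideal.mem_map_of_mem (theta n i).toRingHom hx
  rw [Ideal.map_pow] at h2
  have h3 := Ideal.pow_right_mono h1 (i+1) h2
  have h4 : (Ja n i)^(i+1) = ⊥ := by
    rw [← Ideal.map_pow, Ideal.map_quotient_self]
  rw [h4] at h3
  simpa [RingHom.mem_ker] using h3

noncomputable def thetaBar : Qm n i →+* Qa n i :=
  Ideal.Quotient.lift _ (theta n i).toRingHom (fun a ha => theta_ker n i ha)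

lemma thetaBar_mk (x) : thetaBar n i (Ideal.Quotient.mk _ x) = theta n i x := rfl

noncomputable def phi0 : MvPolynomial (Fin n) ℤ →+* Qm n i :=
  MvPolynomial.eval₂Hom (Int.castRingHom _)
    (fun j => 1 - Ideal.Quotient.mk _ (AddMonoidAlgebra.single (-(Finsupp.single j 1)) (1:ℤ)))

lemma phi0_X (j : Fin n) : phi0 n i (MvPolynomial.X j) =
    1 - Ideal.Quotient.mk _ (AddMonoidAlgebra.single (-(Finsupp.single j 1)) (1:ℤ)) := by
  simp [phi0]

noncomputable abbrev Jm : Ideal (Qm n i) := (ImIdeal n).map (Ideal.Quotient.mk _)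

lemma phi0_ker : IaIdeal n ^ (i+1) ≤ RingHom.ker (phi0 n i) := by
  have h1 : (IaIdeal n).map (phi0 n i) ≤ Jm n i := by
    rw [IaIdeal, Ideal.map_span, Ideal.span_le]
    rintro _ ⟨_, ⟨j, rfl⟩, rfl⟩
    rw [SetLike.mem_coe, phi0_X]
    have : (1:Qm n i) - Ideal.Quotient.mk _ (AddMonoidAlgebra.single (-(Finsupp.single j 1)) (1:ℤ)) =
        -(Ideal.Quotient.mk _ (AddMonoidAlgebra.single (-(Finsupp.single j 1)) (1:ℤ) - 1)) := by
      rw [map_sub, map_one]; ring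
    rw [this]
    exact neg_mem (Ideal.mem_map_of_mem _ (Ideal.subset_span ⟨_, rfl⟩))
  intro x hx
  have h2 := Ideal.mem_map_of_mem (phi0 n i) hx
  rw [Ideal.map_pow] at h2
  have h3 := Ideal.pow_right_mono h1 (i+1) h2
  have h4 : (Jm n i)^(i+1) = ⊥ := by
    rw [← Ideal.map_pow, Ideal.map_quotient_self]
  rw [h4] at h3
  simpa [RingHom.mem_ker] using h3

noncomputable def phiBar : Qa n i →+* Qm n i :=
  Ideal.Quotient.lift _ (phi0 n i) (fun a ha => phi0_ker n i ha)

lemma phiBar_mk (x) : phiBar n i (Ideal.Quotient.mk _ x) = phi0 n i x := rfl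

-- key computations
lemma em_mul_em' (j : Fin n) :
    Ideal.Quotient.mk (ImIdeal n ^ (i+1)) (AddMonoidAlgebra.single (Finsupp.single j 1) (1:ℤ)) *
      Ideal.Quotient.mk _ (AddMonoidAlgebra.single (-(Finsupp.single j 1)) (1:ℤ)) = 1 := by
  rw [← map_mul, AddMonoidAlgebra.single_mul_single, add_neg_cancel, one_mul]
  exact map_one _

lemma phiBar_uu (j : Fin n) :
    phiBar n i ((uu n i j : Qa n i)) =
      Ideal.Quotient.mk _ (AddMonoidAlgebra.single (-(Finsupp.single j 1)) (1:ℤ)) := by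
  rw [uu_val]
  have : (1 : Qa n i) - Ideal.Quotient.mk _ (MvPolynomial.X j) =
      Ideal.Quotient.mk _ (1 - MvPolynomial.X j) := by rw [map_sub, map_one]
  rw [this, phiBar_mk, map_sub, map_one, phi0_X]
  ring

lemma phiBar_uu_inv (j : Fin n) :
    phiBar n i (((uu n i j)⁻¹ : (Qa n i)ˣ) : Qa n i) =
      Ideal.Quotient.mk _ (AddMonoidAlgebra.single (Finsupp.single j 1) (1:ℤ)) := by
  have h1 : phiBar n i (((uu n i j)⁻¹ : (Qa n i)ˣ) : Qa n i) * phiBar n i ((uu n i j : Qa n i)) = 1 := by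
    rw [← map_mul, Units.inv_mul, map_one]
  rw [phiBar_uu] at h1
  have h2 := em_mul_em' n i j
  calc phiBar n i (((uu n i j)⁻¹ : (Qa n i)ˣ) : Qa n i)
      = phiBar n i (((uu n i j)⁻¹ : (Qa n i)ˣ) : Qa n i) *
        (Ideal.Quotient.mk _ (AddMonoidAlgebra.single (-(Finsupp.single j 1)) (1:ℤ)) *
         Ideal.Quotient.mk _ (AddMonoidAlgebra.single (Finsupp.single j 1) (1:ℤ))) := by
        rw [mul_comm (Ideal.Quotient.mk _ _), h2, mul_one]
    _ = (phiBar n i (((uu n i j)⁻¹ : (Qa n i)ˣ) : Qa n i) *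
         Ideal.Quotient.mk _ (AddMonoidAlgebra.single (-(Finsupp.single j 1)) (1:ℤ))) *
         Ideal.Quotient.mk _ (AddMonoidAlgebra.single (Finsupp.single j 1) (1:ℤ)) := by ring
    _ = Ideal.Quotient.mk _ (AddMonoidAlgebra.single (Finsupp.single j 1) (1:ℤ)) := by
        rw [h1, one_mul]

lemma theta_em (j : Fin n) :
    theta n i (AddMonoidAlgebra.single (Finsupp.single j 1) (1:ℤ)) =
      (((uu n i j)⁻¹ : (Qa n i)ˣ) : Qa n i) := by
  rw [theta_single]
  congr 1
  rw [whom_single, zpow_one]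

lemma theta_em' (j : Fin n) :
    theta n i (AddMonoidAlgebra.single (-(Finsupp.single j 1)) (1:ℤ)) = (uu n i j : Qa n i) := by
  rw [← Finsupp.single_neg, theta_single]
  congr 1
  rw [whom_single, zpow_neg, zpow_one, inv_inv]

lemma comp1 : (phiBar n i).comp (thetaBar n i) = RingHom.id _ := by
  apply Ideal.Quotient.ringHom_ext
  apply myRingHomExt
  · intro j
    show phiBar n i (thetaBar n i (Ideal.Quotient.mk _ _)) = Ideal.Quotient.mk _ _
    rw [thetaBar_mk, theta_em, phiBar_uu_inv]
  · intro j
    show phiBar n i (thetaBar n i (Ideal.Quotient.mk _ _)) = Ideal.Quotient.mk _ _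
    rw [thetaBar_mk, theta_em', phiBar_uu]

lemma comp2 : (thetaBar n i).comp (phiBar n i) = RingHom.id _ := by
  apply Ideal.Quotient.ringHom_ext
  apply MvPolynomial.ringHom_ext
  · intro r
    show thetaBar n i (phiBar n i (Ideal.Quotient.mk _ (MvPolynomial.C r))) = Ideal.Quotient.mk _ (MvPolynomial.C r)
    have hc : (MvPolynomial.C r : MvPolynomial (Fin n) ℤ) = (r : MvPolynomial (Fin n) ℤ) := by
      simp
    rw [hc, map_intCast (Ideal.Quotient.mk (IaIdeal n ^ (i+1))), map_intCast (phiBar n i),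
      map_intCast (thetaBar n i)]
  · intro j
    show thetaBar n i (phiBar n i (Ideal.Quotient.mk _ (MvPolynomial.X j))) = Ideal.Quotient.mk _ (MvPolynomial.X j)
    rw [phiBar_mk, phi0_X, map_sub, map_one]
    have : thetaBar n i (Ideal.Quotient.mk _ (AddMonoidAlgebra.single (-(Finsupp.single j 1)) (1:ℤ))) =
        (uu n i j : Qa n i) := by rw [thetaBar_mk, theta_em']
    rw [this, uu_val]
    ring

end Aux

/-- For every `i ≥ 0` there is a ring isomorphism
`φᵢ : ℤ[Λ]/I_m^{i+1} ≃ S*(Λ)/I_a^{i+1}` determined by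
`e^{ωⱼ} ↦ (1 - ωⱼ)^{-1}` (equivalently `φᵢ(e^{Σ aⱼωⱼ}) = ∏ⱼ (1-ωⱼ)^{-aⱼ}`),
with inverse determined by `ωⱼ ↦ 1 - e^{-ωⱼ}`. -/
theorem truncation_iso (n i : ℕ) :
    ∃ e : (AddMonoidAlgebra ℤ (Fin n →₀ ℤ) ⧸ ImIdeal n ^ (i + 1)) ≃+*
          (MvPolynomial (Fin n) ℤ ⧸ IaIdeal n ^ (i + 1)),
      (∀ j : Fin n,
        e (Ideal.Quotient.mk (ImIdeal n ^ (i + 1))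
            (AddMonoidAlgebra.single (Finsupp.single j 1) (1 : ℤ)))
          * Ideal.Quotient.mk (IaIdeal n ^ (i + 1)) (1 - MvPolynomial.X j) = 1) ∧
      (∀ j : Fin n,
        e.symm (Ideal.Quotient.mk (IaIdeal n ^ (i + 1)) (MvPolynomial.X j)) =
          Ideal.Quotient.mk (ImIdeal n ^ (i + 1))
            (1 - AddMonoidAlgebra.single (-(Finsupp.single j 1)) (1 : ℤ))) := by
  refine ⟨RingEquiv.ofRingHom (thetaBar n i) (phiBar n i) (comp2 n i) (comp1 n i), ?_, ?_⟩
  · intro j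
    rw [RingEquiv.ofRingHom_apply, thetaBar_mk, theta_em]
    have : Ideal.Quotient.mk (IaIdeal n ^ (i+1)) (1 - MvPolynomial.X j) = (uu n i j : Qa n i) := by
      rw [uu_val, map_sub, map_one]
    rw [this, Units.inv_mul]
  · intro j
    rw [RingEquiv.ofRingHom_symm_apply, phiBar_mk, phi0_X, map_sub, map_one]
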